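/- Let (θ_i)_{i≥1} be i.i.d. nonnegative random variables with E θ_1^s < ∞ for some s > 0, and let T be a nonnegative integer-valued random variable which does not depend on the future of (θ_i) (i.e., for each n, ((θ_k)_{k≤n}, 1{T≤n}) is independent of (θ_k)_{k>n}) and satisfies E e^{λT} < ∞ for some λ > 0. Then E (∑_{i=1}^T θ_i)^s < ∞. -/

import Mathlib

open MeasureTheory ProbabilityTheory
open scoped ENNReal NNReal

private lemma ptwise_bound {s δ : ℝ} (hs : 0 < s) (hδ : 0 < δ) (a : ℕ → ℝ)
    (ha : ∀ i, 0 ≤ a i) (n : ℕ) :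
    (∑ i ∈ Finset.Icc 1 n, a i) ^ s ≤
      (1 - Real.exp (-δ))⁻¹ ^ s * ∑ i ∈ Finset.Icc 1 n, Real.exp (δ * s * i) * a i ^ s := by
  set r : ℝ := Real.exp (-δ) with hr
  have hr0 : 0 ≤ r := (Real.exp_pos _).le
  have hr1 : r < 1 := Real.exp_lt_one_iff.mpr (by linarith)
  have hC0 : (0 : ℝ) ≤ (1 - r)⁻¹ := inv_nonneg.2 (by linarith)
  rcases (Finset.Icc 1 n).eq_empty_or_nonempty with he | hne
  · rw [he]
    simp [Real.zero_rpow hs.ne']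
  · obtain ⟨i0, hi0, hmax⟩ := Finset.exists_max_image _ (fun i : ℕ => Real.exp (δ * i) * a i) hne
    set M := Real.exp (δ * i0) * a i0 with hM
    have hM0 : 0 ≤ M := mul_nonneg (Real.exp_pos _).le (ha i0)
    have hsum : ∑ i ∈ Finset.Icc 1 n, a i ≤ (1 - r)⁻¹ * M := by
      have h1 : ∀ i ∈ Finset.Icc 1 n, a i ≤ r ^ i * M := by
        intro i hi
        have h2 := hmax i hi
        have h3 : r ^ i = Real.exp (-(δ * i)) := by
          rw [hr, ← Real.exp_nat_mul]
          congr 1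
          ring
        calc a i = Real.exp (-(δ * i)) * (Real.exp (δ * i) * a i) := by
              rw [← mul_assoc, ← Real.exp_add]
              simp
          _ ≤ Real.exp (-(δ * i)) * M := mul_le_mul_of_nonneg_left h2 (Real.exp_pos _).le
          _ = r ^ i * M := by rw [h3]
      calc ∑ i ∈ Finset.Icc 1 n, a i ≤ ∑ i ∈ Finset.Icc 1 n, r ^ i * M :=
            Finset.sum_le_sum h1
        _ = (∑ i ∈ Finset.Icc 1 n, r ^ i) * M := by rw [Finset.sum_mul]
        _ ≤ (1 - r)⁻¹ * M := by
            apply mul_le_mul_of_nonneg_right _ hM0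
            calc ∑ i ∈ Finset.Icc 1 n, r ^ i ≤ ∑' i : ℕ, r ^ i :=
                  Summable.sum_le_tsum _ (fun i _ => pow_nonneg hr0 i)
                    (summable_geometric_of_lt_one hr0 hr1)
              _ = (1 - r)⁻¹ := tsum_geometric_of_lt_one hr0 hr1
    calc (∑ i ∈ Finset.Icc 1 n, a i) ^ s ≤ ((1 - r)⁻¹ * M) ^ s :=
          Real.rpow_le_rpow (Finset.sum_nonneg fun i _ => ha i) hsum hs.le
      _ = (1 - r)⁻¹ ^ s * M ^ s := Real.mul_rpow hC0 hM0
      _ ≤ (1 - r)⁻¹ ^ s * ∑ i ∈ Finset.Icc 1 n, Real.exp (δ * s * i) * a i ^ s := by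
          apply mul_le_mul_of_nonneg_left _ (Real.rpow_nonneg hC0 s)
          have hMs : M ^ s = Real.exp (δ * s * i0) * a i0 ^ s := by
            rw [hM, Real.mul_rpow (Real.exp_pos _).le (ha i0), ← Real.exp_mul]
            ring_nf
          rw [hMs]
          exact Finset.single_le_sum (f := fun i : ℕ => Real.exp (δ * s * i) * a i ^ s)
            (fun i _ => mul_nonneg (Real.exp_pos _).le (Real.rpow_nonneg (ha i) s)) hi0

theorem stmt_4 {Ω : Type*} [MeasurableSpace Ω] (μ : Measure Ω) [IsProbabilityMeasure μ]
    (θ : ℕ → Ω → ℝ) (T : Ω → ℕ) (s lam : ℝ) (hs : 0 < s) (hlam : 0 < lam)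
    (hmeas : ∀ i, Measurable (θ i)) (hTmeas : Measurable T)
    (hnonneg : ∀ i ω, 0 ≤ θ i ω)
    (hindep : iIndepFun θ μ)
    (hident : ∀ i, Measure.map (θ i) μ = Measure.map (θ 1) μ)
    (hmom : ∫⁻ ω, ENNReal.ofReal (θ 1 ω ^ s) ∂μ < ⊤)
    (hTexp : ∫⁻ ω, ENNReal.ofReal (Real.exp (lam * T ω)) ∂μ < ⊤)
    (hfuture : ∀ n : ℕ,
      IndepFun (fun ω => ((fun k : Fin (n + 1) => θ k ω), if T ω ≤ n then (1 : ℝ) else 0))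
        (fun ω => (fun k : ℕ => θ (n + 1 + k) ω)) μ) :
    ∫⁻ ω, ENNReal.ofReal ((∑ i ∈ Finset.Icc 1 (T ω), θ i ω) ^ s) ∂μ < ⊤ := by
  set δ : ℝ := lam / (2 * s) with hδdef
  have hδ : 0 < δ := div_pos hlam (by linarith)
  have hδs : δ * s = lam / 2 := by
    rw [hδdef]
    field_simp
  set A := ∫⁻ ω, ENNReal.ofReal (θ 1 ω ^ s) ∂μ with hA
  set K := ∫⁻ ω, ENNReal.ofReal (Real.exp (lam * T ω)) ∂μ with hK
  have hθs : ∀ i, Measurable fun ω => ENNReal.ofReal (θ i ω ^ s) := fun i =>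
    ((Real.continuous_rpow_const hs.le).measurable.comp (hmeas i)).ennreal_ofReal
  have hTr : Measurable fun ω => (T ω : ℝ) := measurable_from_top.comp hTmeas
  -- tail bound for T
  have htail : ∀ i : ℕ, μ {ω | i ≤ T ω} ≤ ENNReal.ofReal (Real.exp (-(lam * i))) * K := by
    intro i
    have hfm : Measurable fun ω => ENNReal.ofReal (Real.exp (lam * T ω)) :=
      (Real.measurable_exp.comp (measurable_const.mul hTr)).ennreal_ofReal
    have hsub : {ω | i ≤ T ω} ⊆
        {ω | ENNReal.ofReal (Real.exp (lam * i)) ≤ ENNReal.ofReal (Real.exp (lam * T ω))} := by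
      intro ω hω
      exact ENNReal.ofReal_le_ofReal (Real.exp_le_exp.mpr
        (mul_le_mul_of_nonneg_left (Nat.cast_le.mpr hω) hlam.le))
    have hch := mul_meas_ge_le_lintegral₀ (μ := μ) hfm.aemeasurable (ENNReal.ofReal (Real.exp (lam * i)))
    have h1 : ENNReal.ofReal (Real.exp (lam * i)) * μ {ω | i ≤ T ω} ≤ K :=
      le_trans (mul_le_mul_right (measure_mono hsub) _) hch
    have hpos : (0 : ℝ≥0∞) < ENNReal.ofReal (Real.exp (lam * i)) :=
      ENNReal.ofReal_pos.2 (Real.exp_pos _)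
    calc μ {ω | i ≤ T ω}
        ≤ K / ENNReal.ofReal (Real.exp (lam * i)) :=
          (ENNReal.le_div_iff_mul_le (Or.inl hpos.ne') (Or.inl ENNReal.ofReal_ne_top)).mpr
            (by rwa [mul_comm])
      _ = ENNReal.ofReal (Real.exp (-(lam * i))) * K := by
          rw [ENNReal.div_eq_inv_mul, Real.exp_neg,
            ENNReal.ofReal_inv_of_pos (Real.exp_pos _)]
  -- factorization via independence
  have gmeas : Measurable fun x : ℝ => ENNReal.ofReal (x ^ s) :=
    (Real.continuous_rpow_const hs.le).measurable.ennreal_ofReal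
  have hTset : ∀ n : ℕ, MeasurableSet {ω | n + 1 ≤ T ω} := fun n =>
    hTmeas (measurableSet_Ici : MeasurableSet (Set.Ici (n + 1)))
  have hfact : ∀ n : ℕ,
      ∫⁻ ω, ENNReal.ofReal (θ (n + 1) ω ^ s) * ({ω | n + 1 ≤ T ω}.indicator 1 ω) ∂μ
        = A * μ {ω | n + 1 ≤ T ω} := by
    intro n
    set Y : Ω → (ℕ → ℝ) := fun ω => (fun k : ℕ => θ (n + 1 + k) ω) with hY
    set X : Ω → (Fin (n + 1) → ℝ) × ℝ :=
      fun ω => ((fun k : Fin (n + 1) => θ k ω), if T ω ≤ n then (1 : ℝ) else 0) with hX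
    have hYm : Measurable Y := measurable_pi_lambda _ fun k => hmeas _
    have hXm : Measurable X := by
      apply Measurable.prodMk (measurable_pi_lambda _ fun k => hmeas _)
      exact (measurable_from_top (f := fun m : ℕ => if m ≤ n then (1 : ℝ) else 0)).comp hTmeas
    set φ : (ℕ → ℝ) → ℝ≥0∞ := fun v => ENNReal.ofReal (v 0 ^ s) with hφdef
    set ψ : ((Fin (n + 1) → ℝ) × ℝ) → ℝ≥0∞ := fun p => ENNReal.ofReal (1 - p.2) with hψdef
    have hφ : Measurable φ := gmeas.comp (measurable_pi_apply 0)
    have hψ : Measurable ψ := (measurable_const.sub measurable_snd).ennreal_ofReal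
    have hind : IndepFun (φ ∘ Y) (ψ ∘ X) μ := ((hfuture n).symm.comp hφ hψ)
    have hmul := lintegral_mul_eq_lintegral_mul_lintegral_of_indepFun
      (hφ.comp hYm) (hψ.comp hXm) hind
    have heq1 : (φ ∘ Y) = fun ω => ENNReal.ofReal (θ (n + 1) ω ^ s) := rfl
    have heq2 : (ψ ∘ X) = fun ω => ({ω | n + 1 ≤ T ω}.indicator 1 ω) := by
      funext ω
      by_cases h : T ω ≤ n
      · have h' : ¬(n + 1 ≤ T ω) := by omega
        simp [hψdef, hX, Function.comp, h, Set.indicator, h']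
      · have h' : n + 1 ≤ T ω := by omega
        simp [hψdef, hX, Function.comp, h, Set.indicator, h']
    rw [heq1, heq2] at hmul
    simp only [Pi.mul_apply] at hmul
    have hident' : ∫⁻ ω, ENNReal.ofReal (θ (n + 1) ω ^ s) ∂μ = A := by
      calc ∫⁻ ω, ENNReal.ofReal (θ (n + 1) ω ^ s) ∂μ
          = ∫⁻ x, ENNReal.ofReal (x ^ s) ∂(Measure.map (θ (n + 1)) μ) :=
            (lintegral_map gmeas (hmeas _)).symm
        _ = ∫⁻ x, ENNReal.ofReal (x ^ s) ∂(Measure.map (θ 1) μ) := by rw [hident]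
        _ = A := lintegral_map gmeas (hmeas 1)
    rw [hmul, hident', lintegral_indicator_one (hTset n)]
  -- the summands
  set H : ℕ → Ω → ℝ≥0∞ := fun j ω =>
    ENNReal.ofReal (Real.exp (δ * s * ((j + 1 : ℕ) : ℝ))) *
      (ENNReal.ofReal (θ (j + 1) ω ^ s) * ({ω | j + 1 ≤ T ω}.indicator 1 ω)) with hHdef
  have hHmeas : ∀ j, Measurable (H j) := fun j =>
    measurable_const.mul ((hθs (j + 1)).mul (measurable_one.indicator (hTset j)))
  set C : ℝ := (1 - Real.exp (-δ))⁻¹ with hCdef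
  have hexp1 : Real.exp (-δ) < 1 := Real.exp_lt_one_iff.mpr (by linarith)
  have hC0 : 0 ≤ C := inv_nonneg.2 (by linarith)
  -- pointwise bound
  have hpt : ∀ ω, ENNReal.ofReal ((∑ i ∈ Finset.Icc 1 (T ω), θ i ω) ^ s)
      ≤ ENNReal.ofReal (C ^ s) * ∑' j : ℕ, H j ω := by
    intro ω
    have h1 := ptwise_bound (δ := δ) hs hδ (fun i => θ i ω) (fun i => hnonneg i ω) (T ω)
    have h2 : ENNReal.ofReal ((∑ i ∈ Finset.Icc 1 (T ω), θ i ω) ^ s)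
        ≤ ENNReal.ofReal (C ^ s * ∑ i ∈ Finset.Icc 1 (T ω),
            Real.exp (δ * s * i) * θ i ω ^ s) := ENNReal.ofReal_le_ofReal h1
    refine h2.trans (le_of_eq ?_)
    rw [ENNReal.ofReal_mul (Real.rpow_nonneg hC0 s)]
    congr 1
    rw [ENNReal.ofReal_sum_of_nonneg
      (fun i _ => mul_nonneg (Real.exp_pos _).le (Real.rpow_nonneg (hnonneg i ω) s))]
    rw [show Finset.Icc 1 (T ω) = Finset.Ico 1 (T ω + 1) from (Finset.Ico_add_one_right_eq_Icc 1 (T ω)).symm]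
    rw [Finset.sum_Ico_eq_sum_range]
    simp only [Nat.add_sub_cancel]
    have hz : ∀ j ∉ Finset.range (T ω), H j ω = 0 := by
      intro j hj
      have hj' : ¬(j + 1 ≤ T ω) := fun h => hj (Finset.mem_range.2 h)
      simp [hHdef, Set.indicator_of_notMem, hj', show T ω ≤ j by omega]
    rw [tsum_eq_sum hz]
    apply Finset.sum_congr rfl
    intro j hj
    have hj' : j + 1 ≤ T ω := Finset.mem_range.1 hj
    have hmem : ω ∈ {ω | j + 1 ≤ T ω} := hj'
    simp only [hHdef, Set.indicator_of_mem hmem, Pi.one_apply, mul_one]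
    rw [Nat.add_comm 1 j, ENNReal.ofReal_mul (Real.exp_pos _).le]
  -- bound on each integral
  have hHint : ∀ j : ℕ, ∫⁻ ω, H j ω ∂μ
      ≤ ENNReal.ofReal (Real.exp (-(lam / 2)) ^ (j + 1)) * (A * K) := by
    intro j
    have hstep : ∫⁻ ω, H j ω ∂μ
        = ENNReal.ofReal (Real.exp (δ * s * ((j + 1 : ℕ) : ℝ))) *
            (A * μ {ω | j + 1 ≤ T ω}) := by
      simp only [hHdef]
      rw [lintegral_const_mul _ (show Measurable fun ω => ENNReal.ofReal (θ (j + 1) ω ^ s) * ({ω | j + 1 ≤ T ω}.indicator 1 ω) from (hθs (j + 1)).mul (measurable_one.indicator (hTset j))),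
        hfact j]
    have hab : Real.exp (δ * s * ((j + 1 : ℕ) : ℝ)) * Real.exp (-(lam * ((j + 1 : ℕ) : ℝ)))
        = Real.exp (-(lam / 2)) ^ (j + 1) := by
      rw [← Real.exp_add, ← Real.exp_nat_mul]
      congr 1
      rw [hδs]
      push_cast
      ring
    calc ∫⁻ ω, H j ω ∂μ
        = ENNReal.ofReal (Real.exp (δ * s * ((j + 1 : ℕ) : ℝ))) *
            (A * μ {ω | j + 1 ≤ T ω}) := hstep
      _ ≤ ENNReal.ofReal (Real.exp (δ * s * ((j + 1 : ℕ) : ℝ))) *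
            (A * (ENNReal.ofReal (Real.exp (-(lam * ((j + 1 : ℕ) : ℝ)))) * K)) :=
          mul_le_mul_right (mul_le_mul_right (htail (j + 1)) A) _
      _ = (ENNReal.ofReal (Real.exp (δ * s * ((j + 1 : ℕ) : ℝ))) *
            ENNReal.ofReal (Real.exp (-(lam * ((j + 1 : ℕ) : ℝ))))) * (A * K) := by ring
      _ = ENNReal.ofReal (Real.exp (-(lam / 2)) ^ (j + 1)) * (A * K) := by
          rw [← ENNReal.ofReal_mul (Real.exp_pos _).le, hab]
  -- geometric series bound
  have hr1 : ENNReal.ofReal (Real.exp (-(lam / 2))) < 1 :=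
    ENNReal.ofReal_lt_one.2 (Real.exp_lt_one_iff.mpr (by linarith))
  have hgeom : ∑' j : ℕ, ENNReal.ofReal (Real.exp (-(lam / 2)) ^ (j + 1)) < ⊤ := by
    have : ∀ j : ℕ, ENNReal.ofReal (Real.exp (-(lam / 2)) ^ (j + 1))
        = ENNReal.ofReal (Real.exp (-(lam / 2))) ^ (j + 1) := fun j =>
      ENNReal.ofReal_pow (Real.exp_pos _).le _
    simp only [this]
    rw [ENNReal.tsum_geometric_add_one]
    apply ENNReal.mul_lt_top ENNReal.ofReal_lt_top
    rw [lt_top_iff_ne_top]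
    apply ENNReal.inv_ne_top.2
    rw [← pos_iff_ne_zero, tsub_pos_iff_lt]
    exact hr1
  -- put it together
  calc ∫⁻ ω, ENNReal.ofReal ((∑ i ∈ Finset.Icc 1 (T ω), θ i ω) ^ s) ∂μ
      ≤ ∫⁻ ω, ENNReal.ofReal (C ^ s) * ∑' j : ℕ, H j ω ∂μ := lintegral_mono hpt
    _ = ENNReal.ofReal (C ^ s) * ∫⁻ ω, ∑' j : ℕ, H j ω ∂μ :=
        lintegral_const_mul _ (Measurable.ennreal_tsum hHmeas)
    _ = ENNReal.ofReal (C ^ s) * ∑' j : ℕ, ∫⁻ ω, H j ω ∂μ := by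
        rw [lintegral_tsum fun j => (hHmeas j).aemeasurable]
    _ ≤ ENNReal.ofReal (C ^ s) *
          ∑' j : ℕ, ENNReal.ofReal (Real.exp (-(lam / 2)) ^ (j + 1)) * (A * K) :=
        mul_le_mul_right (ENNReal.tsum_le_tsum hHint) _
    _ = ENNReal.ofReal (C ^ s) *
          ((∑' j : ℕ, ENNReal.ofReal (Real.exp (-(lam / 2)) ^ (j + 1))) * (A * K)) := by
        rw [ENNReal.tsum_mul_right]
    _ < ⊤ := by
        apply ENNReal.mul_lt_top ENNReal.ofReal_lt_top
        exact ENNReal.mul_lt_top hgeom (ENNReal.mul_lt_top hmom hTexp)
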